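/- If n is even, then the subalgebra of the Grassmann algebra E on n generators that is generated by all commutators [a,b] = ab − ba coincides with the center of E, i.e. E_com = Z(E). -/

import Mathlib

set_option maxHeartbeats 1000000

open CliffordAlgebra

section Aux

variable {k : Type*} [Field k] {M : Type*} [AddCommGroup M] [Module k M]

local notation "Q0" => (0 : QuadraticForm k M)

lemma gr_swap (x y : M) : ι Q0 y * ι Q0 x = -(ι Q0 x * ι Q0 y) :=
  eq_neg_of_add_eq_zero_right (ExteriorAlgebra.ι_add_mul_swap x y)

lemma gr_commute_ι_ιι (v m₁ m₂ : M) :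
    Commute (ι Q0 v) (ι Q0 m₁ * ι Q0 m₂) := by
  show _ = _
  rw [← mul_assoc, gr_swap m₁ v, neg_mul, mul_assoc, gr_swap m₂ v, mul_neg, neg_neg, mul_assoc]

lemma gr_even_commute_ι {x : ExteriorAlgebra k M} (hx : x ∈ evenOdd Q0 0) (v : M) :
    Commute (ι Q0 v) x := by
  induction x, hx using even_induction with
  | algebraMap r => exact (Algebra.commutes r _).symm
  | add x y hx hy ihx ihy => exact ihx.add_right ihy
  | ι_mul_ι_mul m₁ m₂ x hx ih => exact (gr_commute_ι_ιι v m₁ m₂).mul_right ih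

lemma gr_even_central {x : ExteriorAlgebra k M} (hx : x ∈ evenOdd Q0 0) (y : ExteriorAlgebra k M) :
    Commute y x := by
  induction y using CliffordAlgebra.induction with
  | algebraMap r => exact Algebra.commutes r x
  | ι m => exact gr_even_commute_ι hx m
  | mul a b ha hb => exact ha.mul_left hb
  | add a b ha hb => exact ha.add_left hb

lemma gr_odd_anticomm_ι {x : ExteriorAlgebra k M} (hx : x ∈ evenOdd Q0 1) (v : M) :
    x * ι Q0 v = -(ι Q0 v * x) := by
  induction x, hx using odd_induction with
  | ι m => exact gr_swap v m
  | add x y hx hy ihx ihy => rw [add_mul, ihx, ihy, mul_add, neg_add]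
  | ι_mul_ι_mul m₁ m₂ x hx ih =>
      have h := (gr_commute_ι_ιι (k := k) v m₁ m₂).eq
      calc ι Q0 m₁ * ι Q0 m₂ * x * ι Q0 v
          = ι Q0 m₁ * ι Q0 m₂ * (x * ι Q0 v) := mul_assoc _ _ _
        _ = -(ι Q0 m₁ * ι Q0 m₂ * ι Q0 v * x) := by rw [ih, mul_neg]; simp [mul_assoc]
        _ = -(ι Q0 v * (ι Q0 m₁ * ι Q0 m₂ * x)) := by
              rw [← mul_assoc, ← h, mul_assoc]

lemma gr_comm_mem_center (a b : ExteriorAlgebra k M) :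
    a * b - b * a ∈ Subalgebra.center k (ExteriorAlgebra k M) := by
  have hsup : evenOdd Q0 0 ⊔ evenOdd Q0 1 = ⊤ :=
    codisjoint_iff.mp (evenOdd_isCompl Q0).codisjoint
  obtain ⟨a0, ha0, a1, ha1, rfl⟩ := Submodule.mem_sup.mp
    (show a ∈ evenOdd Q0 0 ⊔ evenOdd Q0 1 by rw [hsup]; trivial)
  obtain ⟨b0, hb0, b1, hb1, rfl⟩ := Submodule.mem_sup.mp
    (show b ∈ evenOdd Q0 0 ⊔ evenOdd Q0 1 by rw [hsup]; trivial)
  have key : (a0 + a1) * (b0 + b1) - (b0 + b1) * (a0 + a1) = a1 * b1 - b1 * a1 := by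
    simp only [add_mul, mul_add]
    rw [(gr_even_central ha0 b0).eq, (gr_even_central ha0 b1).eq,
      (gr_even_central hb0 a1).eq]
    abel
  have m1 : a1 * b1 ∈ evenOdd Q0 0 := by
    have := SetLike.mul_mem_graded ha1 hb1
    rwa [show ((1 : ZMod 2) + 1) = 0 from rfl] at this
  have m2 : b1 * a1 ∈ evenOdd Q0 0 := by
    have := SetLike.mul_mem_graded hb1 ha1
    rwa [show ((1 : ZMod 2) + 1) = 0 from rfl] at this
  rw [key]
  exact Subalgebra.mem_center_iff.mpr fun g => (gr_even_central (sub_mem m1 m2) g).eq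

lemma gr_even_le_adjoin (hk : (2 : k) ≠ 0) {x : ExteriorAlgebra k M} (hx : x ∈ evenOdd Q0 0) :
    x ∈ Algebra.adjoin k {x : ExteriorAlgebra k M | ∃ a b, x = a * b - b * a} := by
  induction x, hx using even_induction with
  | algebraMap r => exact Subalgebra.algebraMap_mem _ r
  | add x y hx hy ihx ihy => exact add_mem ihx ihy
  | ι_mul_ι_mul m₁ m₂ x hx ih =>
      refine mul_mem ?_ ih
      have hmem : ι Q0 m₁ * ι Q0 m₂ - ι Q0 m₂ * ι Q0 m₁ ∈
          Algebra.adjoin k {x : ExteriorAlgebra k M | ∃ a b, x = a * b - b * a} :=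
        Algebra.subset_adjoin ⟨_, _, rfl⟩
      have hrw : ι Q0 m₁ * ι Q0 m₂ =
          (2 : k)⁻¹ • (ι Q0 m₁ * ι Q0 m₂ - ι Q0 m₂ * ι Q0 m₁) := by
        rw [gr_swap m₁ m₂, sub_neg_eq_add, ← two_smul k, smul_smul,
          inv_mul_cancel₀ hk, one_smul]
      rw [hrw]
      exact Subalgebra.smul_mem _ hmem _

end Aux

section Top

open CliffordAlgebra

variable (k : Type*) [Field k] (n : ℕ)

local notation "Qn" => (0 : QuadraticForm k (Fin n → k))

/-- The `j`-th standard basis vector (or `0` if `j ≥ n`). -/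
noncomputable def grE (j : ℕ) : Fin n → k :=
  if h : j < n then Pi.single ⟨j, h⟩ 1 else 0

/-- Partial products `ι e_{j-1} * ⋯ * ι e_0` of the (reversed) top form. -/
noncomputable def grA : ℕ → ExteriorAlgebra k (Fin n → k)
  | 0 => 1
  | j + 1 => ι Qn (grE k n j) * grA j

lemma grA_even (j : ℕ) : grA k n j ∈ evenOdd Qn ((j : ℕ) : ZMod 2) := by
  induction j with
  | zero => simpa [grA] using SetLike.one_mem_graded (evenOdd Qn)
  | succ j ih =>
      have := SetLike.mul_mem_graded (ι_mem_evenOdd_one Qn (grE k n j)) ih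
      rwa [show ((1 : ZMod 2) + ((j : ℕ) : ZMod 2)) = (((j + 1 : ℕ)) : ZMod 2) by
        push_cast; ring] at this

lemma grA_ann (j : ℕ) (i : Fin n) (hij : (i : ℕ) < j) :
    ι Qn (Pi.single i (1 : k)) * grA k n j = 0 := by
  induction j with
  | zero => omega
  | succ j ih =>
      show ι Qn (Pi.single i (1 : k)) * (ι Qn (grE k n j) * grA k n j) = 0
      rcases lt_or_eq_of_le (Nat.lt_succ_iff.mp hij) with h | h
      · rw [← mul_assoc, gr_swap (grE k n j) (Pi.single i (1 : k)), neg_mul, mul_assoc,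
          ih h, mul_zero, neg_zero]
      · have hjn : j < n := h ▸ i.isLt
        have h2 : (⟨j, hjn⟩ : Fin n) = i := by
          apply Fin.ext
          simp [h.symm]
        have hE : grE k n j = Pi.single i (1 : k) := by
          rw [grE, dif_pos hjn, h2]
        rw [hE, ← mul_assoc, ExteriorAlgebra.ι_sq_zero, zero_mul]

lemma grA_ann' (m : Fin n → k) : ι Qn m * grA k n n = 0 := by
  conv_lhs => rw [← Finset.univ_sum_single m]
  rw [map_sum, Finset.sum_mul]
  refine Finset.sum_eq_zero fun i _ => ?_
  have h1 : Pi.single i (m i) = m i • (Pi.single i (1 : k) : Fin n → k) := by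
    rw [← Pi.single_smul, smul_eq_mul, mul_one]
  rw [h1, map_smul, smul_mul_assoc, grA_ann k n n i i.isLt, smul_zero]

lemma grA_span (x : ExteriorAlgebra k (Fin n → k)) :
    x * grA k n n ∈ Submodule.span k {grA k n n} := by
  induction x using CliffordAlgebra.induction with
  | algebraMap r =>
      rw [← Algebra.smul_def]
      exact Submodule.smul_mem _ _ (Submodule.mem_span_singleton_self _)
  | ι m => rw [grA_ann']; exact zero_mem _
  | mul a b ha hb =>
      obtain ⟨c, hc⟩ := Submodule.mem_span_singleton.mp hb
      rw [mul_assoc, ← hc, mul_smul_comm]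
      exact Submodule.smul_mem _ _ ha
  | add a b ha hb =>
      rw [add_mul]
      exact add_mem ha hb

lemma gr_odd_ann_eq_zero (hne : Even n) {z : ExteriorAlgebra k (Fin n → k)}
    (hz1 : z ∈ evenOdd Qn 1)
    (hz2 : ∀ i : Fin n, z * ι Qn (Pi.single i (1 : k)) = 0) : z = 0 := by
  have key : ∀ j, j ≤ n → ∃ w : ExteriorAlgebra k (Fin n → k),
      (∀ i : Fin n, j ≤ (i : ℕ) → w * ι Qn (Pi.single i (1 : k)) = 0) ∧ w * grA k n j = z := by
    intro j
    induction j with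
    | zero => exact fun _ => ⟨z, fun i _ => hz2 i, mul_one z⟩
    | succ j ih =>
        intro hj1
        have hj : j < n := hj1
        obtain ⟨w, hw1, hw2⟩ := ih hj.le
        set d : Module.Dual k (Fin n → k) := LinearMap.proj (⟨j, hj⟩ : Fin n) with hd
        have hkey : ∀ a : Fin n → k,
            contractRight w d * ι Qn a = d a • w - contractRight (w * ι Qn a) d := by
          intro a
          rw [contractRight_mul_ι d a w, sub_sub_cancel]
        refine ⟨contractRight w d, fun i hi => ?_, ?_⟩
        · have hne' : d (Pi.single i (1 : k)) = 0 := by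
            rw [hd]
            exact Pi.single_eq_of_ne (Fin.ne_of_val_ne (show j ≠ (i : ℕ) by omega)) 1
          rw [hkey, hw1 i (by omega), map_zero, LinearMap.zero_apply, hne', zero_smul, sub_zero]
        · show contractRight w d * (ι Qn (grE k n j) * grA k n j) = z
          have hE : grE k n j = Pi.single (⟨j, hj⟩ : Fin n) (1 : k) := dif_pos hj
          have h1 : contractRight w d * ι Qn (grE k n j) = w := by
            rw [hE, hkey, hw1 ⟨j, hj⟩ le_rfl, map_zero, LinearMap.zero_apply, sub_zero, hd]
            rw [show (LinearMap.proj (⟨j, hj⟩ : Fin n) : (Fin n → k) →ₗ[k] k)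
              (Pi.single (⟨j, hj⟩ : Fin n) (1 : k)) = 1 from Pi.single_eq_same _ _, one_smul]
          rw [← mul_assoc, h1, hw2]
  obtain ⟨w, -, hw2⟩ := key n le_rfl
  have hz0 : z ∈ evenOdd Qn 0 := by
    have hsp := grA_span k n w
    rw [hw2] at hsp
    obtain ⟨c, hc⟩ := Submodule.mem_span_singleton.mp hsp
    rw [← hc]
    refine Submodule.smul_mem _ _ ?_
    have hA := grA_even k n n
    rwa [show ((n : ℕ) : ZMod 2) = 0 by
      obtain ⟨m, rfl⟩ := hne
      push_cast
      rw [← two_mul, show (2 : ZMod 2) = 0 from rfl, zero_mul]] at hA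
  have h1 := DirectSum.decompose_of_mem_same (evenOdd Qn) hz0
  have h2 := DirectSum.decompose_of_mem_ne (evenOdd Qn) hz1 (by decide : (1 : ZMod 2) ≠ 0)
  rw [← h1, h2]

end Top

/-- If `n` is even, the subalgebra of the Grassmann algebra on `n` generators generated
by all commutators coincides with the center. -/
theorem grassmann_commutatorSubalgebra_eq_center (k : Type*) [Field k]
    (hk : (2 : k) ≠ 0) (n : ℕ) (hn : 1 ≤ n) (hne : Even n) :
    Algebra.adjoin k {x : ExteriorAlgebra k (Fin n → k) |
        ∃ a b : ExteriorAlgebra k (Fin n → k), x = a * b - b * a}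
      = Subalgebra.center k (ExteriorAlgebra k (Fin n → k)) := by
  apply le_antisymm
  · rw [Algebra.adjoin_le_iff]
    rintro x ⟨a, b, rfl⟩
    exact gr_comm_mem_center a b
  · intro z hz
    have hsup : evenOdd (0 : QuadraticForm k (Fin n → k)) 0 ⊔
        evenOdd (0 : QuadraticForm k (Fin n → k)) 1 = ⊤ :=
      codisjoint_iff.mp (evenOdd_isCompl (0 : QuadraticForm k (Fin n → k))).codisjoint
    obtain ⟨z0, hz0, z1, hz1, rfl⟩ := Submodule.mem_sup.mp
      (show z ∈ evenOdd (0 : QuadraticForm k (Fin n → k)) 0 ⊔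
        evenOdd (0 : QuadraticForm k (Fin n → k)) 1 by rw [hsup]; trivial)
    have hz1c : ∀ i : Fin n,
        z1 * ι (0 : QuadraticForm k (Fin n → k)) (Pi.single i (1 : k)) = 0 := by
      intro i
      set v : Fin n → k := Pi.single i (1 : k) with hv
      have h1 : ι (0 : QuadraticForm k (Fin n → k)) v * (z0 + z1)
          = (z0 + z1) * ι (0 : QuadraticForm k (Fin n → k)) v :=
        Subalgebra.mem_center_iff.mp hz _
      have h2 : ι (0 : QuadraticForm k (Fin n → k)) v * z0
          = z0 * ι (0 : QuadraticForm k (Fin n → k)) v := (gr_even_commute_ι hz0 v).eq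
      have h3 : ι (0 : QuadraticForm k (Fin n → k)) v * z1
          = z1 * ι (0 : QuadraticForm k (Fin n → k)) v := by
        rw [mul_add, add_mul, h2] at h1
        exact add_left_cancel h1
      have h5 : ι (0 : QuadraticForm k (Fin n → k)) v * z1
          = -(ι (0 : QuadraticForm k (Fin n → k)) v * z1) :=
        h3.trans (gr_odd_anticomm_ι hz1 v)
      have h6 : (2 : k) • (ι (0 : QuadraticForm k (Fin n → k)) v * z1) = 0 := by
        rw [two_smul]
        exact add_eq_zero_iff_eq_neg.mpr h5
      have h7 : ι (0 : QuadraticForm k (Fin n → k)) v * z1 = 0 := by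
        calc ι (0 : QuadraticForm k (Fin n → k)) v * z1
            = ((2 : k)⁻¹ * 2) • (ι (0 : QuadraticForm k (Fin n → k)) v * z1) := by
              rw [inv_mul_cancel₀ hk, one_smul]
          _ = (2 : k)⁻¹ • ((2 : k) • (ι (0 : QuadraticForm k (Fin n → k)) v * z1)) :=
              (smul_smul _ _ _).symm
          _ = 0 := by rw [h6, smul_zero]
      rw [← h3, h7]
    have hz1eq : z1 = 0 := gr_odd_ann_eq_zero k n hne hz1 hz1c
    rw [hz1eq, add_zero]
    exact gr_even_le_adjoin hk hz0
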